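/- Let p > 1, a = 0 and b ≥ −p. Assume (f,g) ∈ C²(ℝ)×C¹(ℝ) with supp f, supp g ⊂ {x : |x| ≤ R}, R ≥ 1, and ∫_ℝ g(x)dx > 0. Then there exist constants ε₂ = ε₂(g,p,a,b,R) > 0 and C > 0 independent of ε such that for every 0 < ε ≤ ε₂ and every T ≥ exp(C ε^{−(p−1)}), there is no continuous solution U ∈ C(ℝ×[0,T]) with supp U ⊂ {(x,t) : |x| ≤ t+R} of the integral equation U = ε u_t⁰ + L'_{a,b}(|U|^p). -/

import Mathlib

open MeasureTheory Set
open scoped Classical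

/-- Japanese bracket `⟨x⟩ = √(1+x²)`. -/
noncomputable def jb (x : ℝ) : ℝ := Real.sqrt (1 + x ^ 2)

/-- The operator `L'_{a,b}`. -/
noncomputable def Lab' (a b : ℝ) (v : ℝ → ℝ → ℝ) (x t : ℝ) : ℝ :=
    (1 / 2) * (∫ s in (0:ℝ)..t,
      v (x + t - s) s /
        (jb (s + jb (x + t - s)) ^ (1 + a) * jb (s - jb (x + t - s)) ^ (1 + b)))
  + (1 / 2) * (∫ s in (0:ℝ)..t,
      v (x - t + s) s /
        (jb (s + jb (x - t + s)) ^ (1 + a) * jb (s - jb (x - t + s)) ^ (1 + b)))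

/-- `u_t⁰(x,t) = (1/2){f'(x+t) − f'(x−t) + g(x+t) + g(x−t)}`. -/
noncomputable def ut0 (f g : ℝ → ℝ) (x t : ℝ) : ℝ :=
  (1 / 2) * (deriv f (x + t) - deriv f (x - t) + g (x + t) + g (x - t))

/-- Indicator `χ(x,t)` of the region `t − |x| > R`. -/
noncomputable def chiR (R x t : ℝ) : ℝ := if R < t - |x| then 1 else 0

/-- The weight function `w(x,t)`. -/
noncomputable def wgt (a R x t : ℝ) : ℝ :=
  if 0 < a then chiR R x t * (1 + t - |x|) ^ (1 + a) + (1 - chiR R x t)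
  else if a = 0 then
    chiR R x t * (1 + t - |x|) + (1 - chiR R x t) / Real.log (t + |x| + R)
  else if -1 ≤ a then
    chiR R x t * (1 + t - |x|) ^ (1 + a) + (1 - chiR R x t) * (t + |x| + R) ^ a
  else chiR R x t * (1 + t + |x|) ^ (1 + a) + (1 - chiR R x t) * (t + |x| + R) ^ a

/-- The weighted sup-norm `‖U‖ = sup_{ℝ×[0,T]} |w(x,t)U(x,t)|`. -/
noncomputable def wnorm (a R T : ℝ) (U : ℝ → ℝ → ℝ) : ℝ :=
  ⨆ q : ℝ × Set.Icc (0:ℝ) T, |wgt a R q.1 (q.2 : ℝ) * U q.1 (q.2 : ℝ)|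

/-- The quantity `E_{a,b}(T)`. -/
noncomputable def Eab (p a b R T : ℝ) : ℝ :=
  if 0 < a ∧ 0 < p * (1 + a) + b then 1
  else if a = 0 ∧ -p ≤ b then Real.log (T + 3 * R) ^ p
  else if 0 < a ∧ p * (1 + a) + b = 0 then Real.log (T + 3 * R)
  else if a < 0 ∧ -p ≤ b then (T + 2 * R) ^ (-(a * p))
  else (T + 2 * R) ^ (-(p * (1 + a)) - b)

/-- The quantity `D_a(T)`. -/
noncomputable def Da (a R T : ℝ) : ℝ :=
  if 0 < a then 1
  else if a = 0 then Real.log (T + 3 * R)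
  else (T + 2 * R) ^ (-a)

/-- The five regimes of parameters `(a,b)` appearing in the lifespan estimates. -/
def Regime (p a b : ℝ) : Prop :=
  (0 < a ∧ 0 < p * (1 + a) + b) ∨ (a = 0 ∧ -p ≤ b) ∨
  (0 < a ∧ p * (1 + a) + b = 0) ∨ (a < 0 ∧ -p ≤ b) ∨
  (p * (1 + a) + b < 0 ∧ b < -p)

/-- `u` is a classical solution of the IVP
`u_tt − u_xx = |u_t|^p / (⟨t+⟨x⟩⟩^{1+a}⟨t−⟨x⟩⟩^{1+b})` on `ℝ × [0,T]`
with data `u(x,0) = εf(x)`, `u_t(x,0) = εg(x)`. -/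
def IsClassicalSol (p a b ε T : ℝ) (f g : ℝ → ℝ) (u : ℝ → ℝ → ℝ) : Prop :=
  ContDiffOn ℝ 2 (fun q : ℝ × ℝ => u q.1 q.2)
    ((Set.univ : Set ℝ) ×ˢ Set.Icc (0:ℝ) T) ∧
  (∀ x t : ℝ, 0 < t → t < T →
    deriv (deriv (fun τ => u x τ)) t - deriv (deriv (fun y => u y t)) x
      = |deriv (fun τ => u x τ) t| ^ p /
          (jb (t + jb x) ^ (1 + a) * jb (t - jb x) ^ (1 + b))) ∧
  (∀ x : ℝ, u x 0 = ε * f x) ∧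
  (∀ x : ℝ, deriv (fun τ => u x τ) 0 = ε * g x)

/-- `U` is a continuous solution, supported in `{|x| ≤ t+R}`, of the integral
equation `U = ε u_t⁰ + L'_{a,b}(|U|^p)` on `ℝ × [0,T]`. -/
def IsIntSol (p a b R ε T : ℝ) (f g : ℝ → ℝ) (U : ℝ → ℝ → ℝ) : Prop :=
  ContinuousOn (fun q : ℝ × ℝ => U q.1 q.2)
    ((Set.univ : Set ℝ) ×ˢ Set.Icc (0:ℝ) T) ∧
  (∀ x t : ℝ, 0 ≤ t → t ≤ T → t + R < |x| → U x t = 0) ∧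
  (∀ x t : ℝ, 0 ≤ t → t ≤ T →
    U x t = ε * ut0 f g x t + Lab' a b (fun y s => |U y s| ^ p) x t)

lemma jb_pos (x : ℝ) : 0 < jb x := Real.sqrt_pos.2 (by positivity)

lemma one_le_jb (x : ℝ) : 1 ≤ jb x := by
  rw [jb]
  have h := Real.sqrt_le_sqrt (by nlinarith [sq_nonneg x] : (1:ℝ) ≤ 1 + x^2)
  simpa [Real.sqrt_one] using h

lemma abs_le_jb (x : ℝ) : |x| ≤ jb x := by
  rw [jb, ← Real.sqrt_sq_eq_abs]
  exact Real.sqrt_le_sqrt (by nlinarith)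

lemma jb_le (x : ℝ) : jb x ≤ 1 + |x| := by
  rw [jb, show (1:ℝ) + |x| = Real.sqrt ((1+|x|)^2) from
    (Real.sqrt_sq (by positivity)).symm]
  exact Real.sqrt_le_sqrt (by nlinarith [abs_nonneg x, sq_abs x])

lemma continuous_jb : Continuous jb := by
  unfold jb; fun_prop

lemma weight_pos (b x s : ℝ) : 0 < jb (s + jb x) * jb (s - jb x) ^ (1+b) :=
  mul_pos (jb_pos _) (Real.rpow_pos_of_pos (jb_pos _) _)

lemma weight_bound {b R y s : ℝ} (hR : 1 ≤ R) (hy : -(R+1) ≤ y) (hy' : y ≤ R+1)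
    (hs : 0 ≤ s) :
    jb (s + jb (y+s)) * jb (s - jb (y+s)) ^ (1+b) ≤ ((R+3) * (R+3) ^ |1+b|) * (1+s) := by
  have hjys := jb_le (y+s)
  have hjys' := abs_le_jb (y+s)
  have habs : |y+s| ≤ R+1+s := by
    rw [abs_le]; constructor <;> nlinarith
  have h1 : jb (s + jb (y+s)) ≤ (R+3) * (1+s) := by
    have := jb_le (s + jb (y+s))
    have hpos : 0 ≤ s + jb (y+s) := by nlinarith [jb_pos (y+s)]
    rw [abs_of_nonneg hpos] at this
    nlinarith
  have hzub : s - jb (y+s) ≤ R+1 := by nlinarith [le_abs_self (y+s)]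
  have hzlb : -(R+2) ≤ s - jb (y+s) := by nlinarith
  have hjz : jb (s - jb (y+s)) ≤ R+3 := by
    have := jb_le (s - jb (y+s))
    have : |s - jb (y+s)| ≤ R+2 := abs_le.2 ⟨hzlb, by linarith⟩
    nlinarith [jb_le (s - jb (y+s))]
  have h2 : jb (s - jb (y+s)) ^ (1+b) ≤ (R+3) ^ |1+b| := by
    rcases le_or_gt 0 (1+b) with hbb | hbb
    · calc jb (s - jb (y+s)) ^ (1+b) ≤ (R+3) ^ (1+b) :=
            Real.rpow_le_rpow (jb_pos _).le hjz hbb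
        _ ≤ (R+3) ^ |1+b| :=
            Real.rpow_le_rpow_of_exponent_le (by linarith) (le_abs_self _)
    · calc jb (s - jb (y+s)) ^ (1+b) ≤ 1 :=
            Real.rpow_le_one_of_one_le_of_nonpos (one_le_jb _) hbb.le
        _ ≤ (R+3) ^ |1+b| := Real.one_le_rpow (by linarith) (abs_nonneg _)
  calc jb (s + jb (y+s)) * jb (s - jb (y+s)) ^ (1+b)
      ≤ ((R+3) * (1+s)) * ((R+3) ^ |1+b|) := by
        apply mul_le_mul h1 h2 (Real.rpow_nonneg (jb_pos _).le _) (by positivity)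
    _ = ((R+3) * (R+3) ^ |1+b|) * (1+s) := by ring

lemma my_gronwall (p K A t₀ T : ℝ) (φ : ℝ → ℝ) (hp : 1 < p) (hK : 0 < K) (hA : 0 < A)
    (ht₀ : 0 ≤ t₀) (hT : t₀ ≤ T) (hφ : ContinuousOn φ (Icc t₀ T))
    (hineq : ∀ t ∈ Icc t₀ T, A + K * ∫ s in t₀..t, |φ s| ^ p / (1 + s) ≤ φ t) :
    (p - 1) * K * (Real.log (1 + T) - Real.log (1 + t₀)) < A ^ (1 - p) := by
  set c : ℝ → ℝ := fun s => min (max s t₀) T with hc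
  have hcmem : ∀ s, c s ∈ Icc t₀ T := fun s =>
    ⟨le_min (le_max_right _ _) hT, min_le_right _ _⟩
  have hccont : Continuous c := (continuous_id.max continuous_const).min continuous_const
  have hcfix : ∀ s ∈ Icc t₀ T, c s = s := by
    intro s hs
    simp only [hc]
    rw [max_eq_left hs.1, min_eq_left hs.2]
  set F : ℝ → ℝ := fun s => |φ (c s)| ^ p / (1 + c s) with hF
  have hFcont : Continuous F := by
    apply Continuous.div
    · exact ((hφ.comp_continuous hccont hcmem).abs).rpow_const fun s => Or.inr (by linarith)
    · exact continuous_const.add hccont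
    · intro s
      have h := (hcmem s).1
      exact (by linarith : (0:ℝ) < 1 + c s).ne'
  have hFnonneg : ∀ s, 0 ≤ F s := by
    intro s
    have := (hcmem s).1
    have h1 : (0:ℝ) < 1 + c s := by linarith
    exact div_nonneg (Real.rpow_nonneg (abs_nonneg _) _) h1.le
  set Ψ : ℝ → ℝ := fun t => ∫ s in t₀..t, F s with hΨ
  have hΨderiv : ∀ t, HasDerivAt Ψ (F t) t := fun t =>
    (hFcont.integral_hasStrictDerivAt t₀ t).hasDerivAt
  have hΨcont : Continuous Ψ := continuous_iff_continuousAt.2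
    fun t => (hΨderiv t).differentiableAt.continuousAt
  have hΨeq : ∀ t ∈ Icc t₀ T, Ψ t = ∫ s in t₀..t, |φ s| ^ p / (1 + s) := by
    intro t ht
    apply intervalIntegral.integral_congr
    intro s hs
    rw [uIcc_of_le ht.1] at hs
    have hs' : s ∈ Icc t₀ T := ⟨hs.1, hs.2.trans ht.2⟩
    simp [hF, hcfix s hs']
  have hΨnonneg : ∀ t, t₀ ≤ t → 0 ≤ Ψ t := fun t ht =>
    intervalIntegral.integral_nonneg ht fun u _ => hFnonneg u
  have hbase : ∀ t, t₀ ≤ t → 0 < A + K * Ψ t := by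
    intro t ht
    have := hΨnonneg t ht
    nlinarith
  have hφge : ∀ t ∈ Icc t₀ T, A + K * Ψ t ≤ φ t := by
    intro t ht
    rw [hΨeq t ht]
    exact hineq t ht
  set Θ : ℝ → ℝ := fun t => (A + K * Ψ t) ^ (1 - p) + (p - 1) * K * Real.log (1 + t) with hΘ
  have hΘanti : AntitoneOn Θ (Icc t₀ T) := by
    apply antitoneOn_of_deriv_nonpos (convex_Icc _ _)
    · apply ContinuousOn.add
      · apply ContinuousOn.rpow_const
        · exact (continuous_const.add (continuous_const.mul hΨcont)).continuousOn
        · exact fun t ht => Or.inl (hbase t ht.1).ne'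
      · apply ContinuousOn.mul continuousOn_const
        apply ContinuousOn.log (continuous_const.add continuous_id).continuousOn
        intro t ht
        have := ht.1
        exact (by linarith : (0:ℝ) < 1 + t).ne'
    · intro t ht
      rw [interior_Icc] at ht
      have hB := hbase t ht.1.le
      have h1 : HasDerivAt (fun t => A + K * Ψ t) (K * F t) t :=
        ((hΨderiv t).const_mul K).const_add A
      have h2 := h1.rpow_const (p := 1 - p) (Or.inl hB.ne')
      have h1t : (0:ℝ) < 1 + t := by nlinarith [ht.1]
      have h3 : HasDerivAt (fun t => Real.log (1 + t)) (1 / (1 + t)) t := by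
        have h0 : HasDerivAt (fun t : ℝ => 1 + t) 1 t := (hasDerivAt_id t).const_add 1
        simpa using h0.log h1t.ne'
      exact ((h2.add (h3.const_mul ((p-1)*K))).differentiableAt).differentiableWithinAt
    · intro t ht
      rw [interior_Icc] at ht
      have htmem : t ∈ Icc t₀ T := ⟨ht.1.le, ht.2.le⟩
      have hB := hbase t ht.1.le
      have h1 : HasDerivAt (fun t => A + K * Ψ t) (K * F t) t :=
        ((hΨderiv t).const_mul K).const_add A
      have h2 := h1.rpow_const (p := 1 - p) (Or.inl hB.ne')
      have h1t : (0:ℝ) < 1 + t := by nlinarith [ht.1]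
      have h3 : HasDerivAt (fun t => Real.log (1 + t)) (1 / (1 + t)) t := by
        have h0 : HasDerivAt (fun t : ℝ => 1 + t) 1 t := (hasDerivAt_id t).const_add 1
        simpa using h0.log h1t.ne'
      have hD : HasDerivAt Θ ((K * F t) * (1 - p) * (A + K * Ψ t) ^ (1 - p - 1)
          + (p - 1) * K * (1 / (1 + t))) t := h2.add (h3.const_mul ((p-1)*K))
      rw [hD.deriv]
      have hφt := hφge t htmem
      have hφpos : 0 < φ t := lt_of_lt_of_le hB hφt
      have hFt : F t = φ t ^ p / (1 + t) := by
        simp [hF, hcfix t htmem, abs_of_pos hφpos]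
      have hBp : 0 < (A + K * Ψ t) ^ (-p) := Real.rpow_pos_of_pos hB _
      have hrp : (A + K * Ψ t) ^ p ≤ φ t ^ p :=
        Real.rpow_le_rpow hB.le hφt (by linarith)
      have hFge : (A + K * Ψ t) ^ p / (1 + t) ≤ F t := by
        rw [hFt]
        gcongr
      have h4 : (A + K * Ψ t) ^ p / (1 + t) * (A + K * Ψ t) ^ (-p) ≤
          F t * (A + K * Ψ t) ^ (-p) := mul_le_mul_of_nonneg_right hFge hBp.le
      have h5 : (A + K * Ψ t) ^ p / (1 + t) * (A + K * Ψ t) ^ (-p) = 1 / (1 + t) := by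
        rw [div_mul_eq_mul_div, ← Real.rpow_add hB]
        simp
      rw [h5] at h4
      have hexp : (1:ℝ) - p - 1 = -p := by ring
      rw [hexp]
      have hring : (K * F t) * (1 - p) * (A + K * Ψ t) ^ (-p) =
          -((p - 1) * K * (F t * (A + K * Ψ t) ^ (-p))) := by ring
      rw [hring]
      have h6 : (p - 1) * K * (1 / (1 + t)) ≤ (p - 1) * K * (F t * (A + K * Ψ t) ^ (-p)) := by
        apply mul_le_mul_of_nonneg_left h4
        nlinarith
      linarith
  have hTmem : T ∈ Icc t₀ T := ⟨hT, le_rfl⟩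
  have ht₀mem : t₀ ∈ Icc t₀ T := ⟨le_rfl, hT⟩
  have hfin := hΘanti ht₀mem hTmem hT
  have hΨ0 : Ψ t₀ = 0 := intervalIntegral.integral_same
  have hpos : 0 < (A + K * Ψ T) ^ (1 - p) := Real.rpow_pos_of_pos (hbase T hT) _
  have hΘt₀ : Θ t₀ = A ^ (1 - p) + (p - 1) * K * Real.log (1 + t₀) := by
    simp [hΘ, hΨ0]
  have hΘT : Θ T = (A + K * Ψ T) ^ (1 - p) + (p - 1) * K * Real.log (1 + T) := rfl
  rw [hΘT, hΘt₀] at hfin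
  nlinarith


set_option maxHeartbeats 2000000 in
theorem blow_up_a_eq_zero (p a b R : ℝ) (f g : ℝ → ℝ)
    (hp : 1 < p) (ha : a = 0) (hb : -p ≤ b)
    (hR : 1 ≤ R) (hf : ContDiff ℝ 2 f) (hg : ContDiff ℝ 1 g)
    (hsf : ∀ x : ℝ, R < |x| → f x = 0) (hsg : ∀ x : ℝ, R < |x| → g x = 0) (hgint : 0 < ∫ x : ℝ, g x) :
    ∃ ε₂ : ℝ, 0 < ε₂ ∧ ∃ C : ℝ, 0 < C ∧ ∀ ε : ℝ, 0 < ε → ε ≤ ε₂ →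
      ∀ T : ℝ, Real.exp (C * ε ^ (-(p - 1))) ≤ T →
        ¬ ∃ U : ℝ → ℝ → ℝ, IsIntSol p a b R ε T f g U := by
  subst ha
  have hdf0 : ∀ z : ℝ, R < |z| → deriv f z = 0 := by
    intro z hz
    have hopen : IsOpen {w : ℝ | R < |w|} := isOpen_lt continuous_const continuous_abs
    have hev : f =ᶠ[nhds z] (fun _ => (0:ℝ)) :=
      Filter.eventuallyEq_of_mem (hopen.mem_nhds hz) (fun w hw => hsf w hw)
    rw [hev.deriv_eq]
    simp
  have hfdiff : Differentiable ℝ f := hf.differentiable (by simp)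
  have hdfc : Continuous (deriv f) := hf.continuous_deriv one_le_two
  have hgc : Continuous g := hg.continuous
  have hRR : -(R+1) ≤ (R+1:ℝ) := by linarith
  have hintf : (∫ z in (-(R+1))..(R+1), deriv f z) = 0 := by
    rw [intervalIntegral.integral_deriv_eq_sub (fun z _ => hfdiff z)
      (hdfc.intervalIntegrable _ _)]
    have e1 : f (R+1) = 0 := hsf _ (by rw [abs_of_pos (by linarith : (0:ℝ) < R+1)]; linarith)
    have e2 : f (-(R+1)) = 0 := hsf _ (by
      rw [abs_neg, abs_of_pos (by linarith : (0:ℝ) < R+1)]; linarith)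
    rw [e1, e2]
    ring
  have hintg : (∫ z in (-(R+1))..(R+1), g z) = ∫ x, g x := by
    rw [intervalIntegral.integral_of_le hRR]
    apply setIntegral_eq_integral_of_forall_compl_eq_zero
    intro x hx
    apply hsg
    simp only [mem_Ioc, not_and_or, not_lt, not_le] at hx
    rcases hx with h | h
    · have := neg_abs_le x; linarith
    · linarith [le_abs_self x]
  obtain ⟨y₀, hy₀mem, hy₀⟩ : ∃ z ∈ Icc (-(R+1)) (R+1), 0 < g z - deriv f z := by
    by_contra hcon
    push_neg at hcon
    have hnn : 0 ≤ ∫ z in (-(R+1))..(R+1), (deriv f z - g z) :=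
      intervalIntegral.integral_nonneg hRR (fun u hu => by linarith [hcon u hu])
    rw [intervalIntegral.integral_sub (hdfc.intervalIntegrable _ _)
      (hgc.intervalIntegrable _ _), hintf, hintg] at hnn
    linarith
  obtain ⟨c, hcdef⟩ : ∃ x : ℝ, x = (g y₀ - deriv f y₀)/2 := ⟨_, rfl⟩
  have hc : 0 < c := by rw [hcdef]; linarith
  obtain ⟨C₁, hC₁def⟩ : ∃ x : ℝ, x = (R+3) * (R+3) ^ |1+b| := ⟨_, rfl⟩
  have hC₁ : 0 < C₁ := by
    rw [hC₁def]; exact mul_pos (by linarith) (Real.rpow_pos_of_pos (by linarith) _)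
  obtain ⟨K, hKdef⟩ : ∃ x : ℝ, x = 1/(2*C₁) := ⟨_, rfl⟩
  have hK : 0 < K := by rw [hKdef]; exact one_div_pos.2 (by linarith)
  have hPK : 0 < (p-1)*K := mul_pos (by linarith) hK
  have hcp : 0 < c ^ (1-p) := Real.rpow_pos_of_pos hc _
  obtain ⟨C, hCdef⟩ : ∃ x : ℝ, x = c^(1-p)/((p-1)*K) + (Real.log (R+2) + 1) := ⟨_, rfl⟩
  have hlogR2 : 0 ≤ Real.log (R+2) := Real.log_nonneg (by linarith)
  have hqq : 0 < c^(1-p)/((p-1)*K) := div_pos hcp hPK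
  have hCpos : 0 < C := by rw [hCdef]; linarith
  have hlogC : Real.log (R+2) ≤ C := by rw [hCdef]; linarith
  refine ⟨1, one_pos, C, hCpos, ?_⟩
  intro ε hε hε1 T hT hex
  obtain ⟨U, hcont, hsupp, heq⟩ := hex
  obtain ⟨E, hEdef⟩ : ∃ x : ℝ, x = ε ^ (-(p-1)) := ⟨_, rfl⟩
  have hE1 : 1 ≤ E := by
    rw [hEdef]; exact Real.one_le_rpow_of_pos_of_le_one_of_nonpos hε hε1 (by linarith)
  have hT' : Real.exp (C * E) ≤ T := by rw [hEdef]; exact hT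
  have hCE : C ≤ C*E := le_mul_of_one_le_right hCpos.le hE1
  have hTlb : R + 2 ≤ T := by
    have h1 : Real.exp (Real.log (R+2)) ≤ Real.exp (C*E) :=
      Real.exp_le_exp.2 (le_trans hlogC hCE)
    rw [Real.exp_log (by linarith)] at h1
    exact h1.trans hT'
  have hy₀l : -(R+1) ≤ y₀ := hy₀mem.1
  have hy₀r : y₀ ≤ R+1 := hy₀mem.2
  have hUc : ContinuousOn (fun s : ℝ => U (y₀ + s) s) (Icc 0 T) := by
    have hmap : MapsTo (fun s : ℝ => ((y₀ + s : ℝ), s)) (Icc 0 T)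
        ((Set.univ : Set ℝ) ×ˢ Set.Icc (0:ℝ) T) := fun s hs => ⟨mem_univ _, hs⟩
    exact hcont.comp (Continuous.continuousOn (by continuity)) hmap
  have key : ∀ t ∈ Icc (R+1) T,
      ε * c + K * ∫ s in (R+1)..t, |U (y₀+s) s| ^ p / (1+s) ≤ U (y₀ + t) t := by
    intro t ht
    have hRt : R+1 ≤ t := ht.1
    have h0t : (0:ℝ) ≤ t := by linarith
    have htT : t ≤ T := ht.2
    have h1 := heq (y₀ + t) t h0t htT
    simp only [Lab', add_zero, Real.rpow_one] at h1
    have hbig : R < |y₀ + t + t| := by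
      have h2 : R+1 ≤ y₀ + t + t := by linarith
      linarith [le_abs_self (y₀ + t + t)]
    have hut : ut0 f g (y₀+t) t = c := by
      simp only [ut0]
      rw [show y₀ + t - t = y₀ by ring]
      rw [hdf0 _ hbig, hsg _ hbig, hcdef]
      ring
    rw [hut] at h1
    have hI1 : 0 ≤ ∫ s in (0:ℝ)..t, |U (y₀ + t + t - s) s| ^ p /
        (jb (s + jb (y₀ + t + t - s)) * jb (s - jb (y₀ + t + t - s)) ^ (1 + b)) :=
      intervalIntegral.integral_nonneg h0t (fun u hu =>
        div_nonneg (Real.rpow_nonneg (abs_nonneg _) _) (weight_pos b _ u).le)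
    have hI2eq : (∫ s in (0:ℝ)..t, |U (y₀ + t - t + s) s| ^ p /
          (jb (s + jb (y₀ + t - t + s)) * jb (s - jb (y₀ + t - t + s)) ^ (1 + b)))
        = ∫ s in (0:ℝ)..t, |U (y₀ + s) s| ^ p /
          (jb (s + jb (y₀ + s)) * jb (s - jb (y₀ + s)) ^ (1 + b)) := by
      apply intervalIntegral.integral_congr
      intro s _
      dsimp only
      rw [show y₀ + t - t + s = y₀ + s by ring]
    rw [hI2eq] at h1
    have hsub : Icc (0:ℝ) t ⊆ Icc (0:ℝ) T := Icc_subset_Icc le_rfl htT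
    have hnum : ContinuousOn (fun s : ℝ => |U (y₀+s) s| ^ p) (Icc 0 t) :=
      ((hUc.mono hsub).abs).rpow_const (fun s _ => Or.inr (by linarith))
    have hWc : Continuous (fun s : ℝ =>
        jb (s + jb (y₀+s)) * jb (s - jb (y₀+s)) ^ (1+b)) := by
      have c1 : Continuous (fun s : ℝ => jb (s + jb (y₀+s))) :=
        continuous_jb.comp (continuous_id.add
          (continuous_jb.comp (continuous_const.add continuous_id)))
      have c2 : Continuous (fun s : ℝ => jb (s - jb (y₀+s))) :=
        continuous_jb.comp (continuous_id.sub
          (continuous_jb.comp (continuous_const.add continuous_id)))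
      exact c1.mul (c2.rpow_const (fun s => Or.inl (jb_pos _).ne'))
    have hint2 : IntervalIntegrable (fun s => |U (y₀+s) s| ^ p /
        (jb (s + jb (y₀+s)) * jb (s - jb (y₀+s)) ^ (1+b))) volume 0 t := by
      apply ContinuousOn.intervalIntegrable
      rw [uIcc_of_le h0t]
      exact hnum.div hWc.continuousOn (fun s _ => (weight_pos b _ s).ne')
    have hint1 : IntervalIntegrable (fun s => |U (y₀+s) s| ^ p / (C₁*(1+s)))
        volume 0 t := by
      apply ContinuousOn.intervalIntegrable
      rw [uIcc_of_le h0t]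
      exact hnum.div ((continuous_const.mul (continuous_const.add continuous_id)).continuousOn)
        (fun s hs => (mul_pos hC₁ (by linarith [hs.1] : (0:ℝ) < 1 + s)).ne')
    have hmono : (∫ s in (0:ℝ)..t, |U (y₀+s) s| ^ p / (C₁*(1+s)))
        ≤ ∫ s in (0:ℝ)..t, |U (y₀+s) s| ^ p /
          (jb (s + jb (y₀+s)) * jb (s - jb (y₀+s)) ^ (1+b)) := by
      apply intervalIntegral.integral_mono_on h0t hint1 hint2
      intro s hs
      exact div_le_div_of_nonneg_left (Real.rpow_nonneg (abs_nonneg _) _)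
        (weight_pos b _ s) (by rw [hC₁def]; exact weight_bound hR hy₀l hy₀r hs.1)
    have hconst : (∫ s in (0:ℝ)..t, |U (y₀+s) s| ^ p / (C₁*(1+s)))
        = (1/C₁) * ∫ s in (0:ℝ)..t, |U (y₀+s) s| ^ p / (1+s) := by
      rw [← intervalIntegral.integral_const_mul]
      apply intervalIntegral.integral_congr
      intro s hs
      rw [uIcc_of_le h0t] at hs
      have h1s : (0:ℝ) < 1 + s := by linarith [hs.1]
      field_simp
    have hq_cont : ContinuousOn (fun s : ℝ => |U (y₀+s) s| ^ p / (1+s)) (Icc 0 T) := by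
      apply ContinuousOn.div
      · exact (hUc.abs).rpow_const (fun s _ => Or.inr (by linarith))
      · exact (continuous_const.add continuous_id).continuousOn
      · exact fun s hs => (by linarith [hs.1] : (0:ℝ) < 1 + s).ne'
    have hqa : IntervalIntegrable (fun s : ℝ => |U (y₀+s) s| ^ p / (1+s))
        volume 0 (R+1) := by
      apply ContinuousOn.intervalIntegrable
      rw [uIcc_of_le (by linarith : (0:ℝ) ≤ R+1)]
      exact hq_cont.mono (Icc_subset_Icc le_rfl (by linarith))
    have hqb : IntervalIntegrable (fun s : ℝ => |U (y₀+s) s| ^ p / (1+s))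
        volume (R+1) t := by
      apply ContinuousOn.intervalIntegrable
      rw [uIcc_of_le hRt]
      exact hq_cont.mono (Icc_subset_Icc (by linarith) htT)
    have hsplit : (∫ s in (0:ℝ)..t, |U (y₀+s) s| ^ p / (1+s))
        = (∫ s in (0:ℝ)..(R+1), |U (y₀+s) s| ^ p / (1+s))
          + ∫ s in (R+1)..t, |U (y₀+s) s| ^ p / (1+s) :=
      (intervalIntegral.integral_add_adjacent_intervals hqa hqb).symm
    have hqa0 : 0 ≤ ∫ s in (0:ℝ)..(R+1), |U (y₀+s) s| ^ p / (1+s) :=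
      intervalIntegral.integral_nonneg (by linarith) (fun u hu =>
        div_nonneg (Real.rpow_nonneg (abs_nonneg _) _) (by linarith [hu.1]))
    have h10 : (1/C₁) * ((∫ s in (0:ℝ)..(R+1), |U (y₀+s) s| ^ p / (1+s))
          + ∫ s in (R+1)..t, |U (y₀+s) s| ^ p / (1+s))
        ≤ ∫ s in (0:ℝ)..t, |U (y₀+s) s| ^ p /
          (jb (s + jb (y₀+s)) * jb (s - jb (y₀+s)) ^ (1+b)) := by
      rw [← hsplit, ← hconst]
      exact hmono
    have h11 : (1/C₁) * (∫ s in (R+1)..t, |U (y₀+s) s| ^ p / (1+s))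
        ≤ (1/C₁) * ((∫ s in (0:ℝ)..(R+1), |U (y₀+s) s| ^ p / (1+s))
          + ∫ s in (R+1)..t, |U (y₀+s) s| ^ p / (1+s)) := by
      apply mul_le_mul_of_nonneg_left (by linarith) (one_div_pos.2 hC₁).le
    have hKJ : K * (∫ s in (R+1)..t, |U (y₀+s) s| ^ p / (1+s))
        = 1/2 * ((1/C₁) * ∫ s in (R+1)..t, |U (y₀+s) s| ^ p / (1+s)) := by
      rw [hKdef]; ring
    rw [hKJ]
    linarith
  have hgron := my_gronwall p K (ε*c) (R+1) T (fun s => U (y₀+s) s) hp hK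
    (mul_pos hε hc) (by linarith) (by linarith)
    (hUc.mono (Icc_subset_Icc (by linarith) le_rfl)) key
  have hlogeq : Real.log (1 + (R+1)) = Real.log (R+2) := by
    rw [show (1:ℝ)+(R+1) = R+2 by ring]
  have hmulr : (ε*c)^(1-p) = E * c^(1-p) := by
    rw [Real.mul_rpow hε.le hc.le, hEdef, show -(p-1) = 1-p by ring]
  have hTlog : C * E ≤ Real.log (1+T) := by
    apply (Real.le_log_iff_exp_le (by linarith : (0:ℝ) < 1+T)).2
    linarith [hT']
  have h7 : (p-1)*K*(C*E) ≤ (p-1)*K*Real.log (1+T) :=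
    mul_le_mul_of_nonneg_left hTlog hPK.le
  have hcc : (p-1)*K*(c^(1-p)/((p-1)*K)) = c^(1-p) := mul_div_cancel₀ _ hPK.ne'
  have h8 : (p-1)*K*(C*E) = E*c^(1-p) + (p-1)*K*((Real.log (R+2)+1)*E) := by
    rw [hCdef]
    linear_combination E * hcc
  have h9 : (p-1)*K*Real.log (R+2) ≤ (p-1)*K*((Real.log (R+2)+1)*E) :=
    mul_le_mul_of_nonneg_left (by nlinarith) hPK.le
  rw [hlogeq, hmulr] at hgron
  linarith
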